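/- Let M be a connected simple matroid of rank r ≥ 3 with β(M) = 1 that is parallel irreducible, and let e₁ be an edge incident to a degree-2 vertex in a graphic representation of M as a series-parallel network. If M is a series connection relative to e₁, then M has at most one 3-element circuit containing e₁, and consequently the simplification of M/e₁ has at least |M| − 2 elements. -/

import Mathlib

open Set Polynomial Matroid CategoryTheory

universe u

namespace PaperBC

variable {α : Type*}

/-- A circuit of a matroid: a minimal dependent subset of the ground set. -/
def MCircuit (M : Matroid α) (C : Set α) : Prop :=
  ¬ M.Indep C ∧ C ⊆ M.E ∧ ∀ D, D ⊂ C → M.Indep D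

/-- A broken circuit with respect to an order relation `r` (to be read as `≤`):
a circuit with its least element removed. -/
def BrokenCircuit (r : α → α → Prop) (M : Matroid α) (B : Set α) : Prop :=
  ∃ C e, MCircuit M C ∧ e ∈ C ∧ (∀ x ∈ C, r e x) ∧ B = C \ {e}

/-- The broken circuit complex: subsets of the ground set containing no broken circuit. -/
def BCC (r : α → α → Prop) (M : Matroid α) : Set (Set α) :=
  {F | F ⊆ M.E ∧ ∀ B, BrokenCircuit r M B → ¬ B ⊆ F}

/-- The independence (matroid) complex. -/
def IndepComplex (M : Matroid α) : Set (Set α) := {F | M.Indep F}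

/-- The link of a face in a complex. -/
def linkOf (Δ : Set (Set α)) (F : Set α) : Set (Set α) :=
  {G | F ∪ G ∈ Δ ∧ Disjoint F G}

/-- Vertex set of a complex. -/
def vertexSet (Δ : Set (Set α)) : Set α := {v | {v} ∈ Δ}

def dimLE (Δ : Set (Set α)) (d : ℕ) : Prop := ∀ s ∈ Δ, s.ncard ≤ d + 1

def dimEq (Δ : Set (Set α)) (d : ℕ) : Prop := dimLE Δ d ∧ ∃ s ∈ Δ, s.ncard = d + 1

/-- `Δ` is an `n`-gon (cycle) as a 1-dimensional complex. -/
def IsNGon (Δ : Set (Set α)) (n : ℕ) : Prop :=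
  3 ≤ n ∧ ∃ v : ℕ → α, (∀ i j, i < n → j < n → v i = v j → i = j) ∧
    Δ = {s | s = ∅ ∨ (∃ i < n, s = {v i}) ∨ ∃ i < n, s = {v i, v ((i + 1) % n)}}

/-- `Δ` is a path on `m` vertices as a simplicial complex. -/
def IsPathComplex (Δ : Set (Set α)) (m : ℕ) : Prop :=
  1 ≤ m ∧ ∃ v : ℕ → α, (∀ i j, i < m → j < m → v i = v j → i = j) ∧
    Δ = {s | s = ∅ ∨ (∃ i < m, s = {v i}) ∨ ∃ i, i + 1 < m ∧ s = {v i, v (i + 1)}}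

/-- The h-polynomial `h(t) = f(t-1)` of a complex with prescribed rank `r`,
where `f(t) = ∑ fᵢ t^{r-i}`. -/
noncomputable def hPoly (Δ : Set (Set α)) (r : ℕ) : Polynomial ℤ :=
  ∑ i ∈ Finset.range (r + 1),
    Polynomial.C (({s ∈ Δ | s.ncard = i}.ncard : ℤ)) * (X - 1) ^ (r - i)

/-- The `i`-th entry of the h-vector: the coefficient of `t^{r-i}` in the h-polynomial. -/
noncomputable def hVec (Δ : Set (Set α)) (r i : ℕ) : ℤ := (hPoly Δ r).coeff (r - i)

/-- The rank of a matroid, as the cardinality of some base. -/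
noncomputable def rk (M : Matroid α) : ℕ := M.exists_isBase.choose.ncard

/-- A simple matroid: every circuit has at least 3 elements. -/
def MSimple (M : Matroid α) : Prop := ∀ C, MCircuit M C → 3 ≤ C.ncard

/-- A connected matroid: any two distinct elements lie on a common circuit. -/
def MConnected (M : Matroid α) : Prop :=
  M.E.Nonempty ∧ ∀ e ∈ M.E, ∀ f ∈ M.E, e ≠ f → ∃ C, MCircuit M C ∧ e ∈ C ∧ f ∈ C

def MLoop (M : Matroid α) (e : α) : Prop := e ∈ M.E ∧ ¬ M.Indep {e}

def MColoop (M : Matroid α) (e : α) : Prop := e ∈ M.E ∧ ∀ B, M.IsBase B → e ∈ B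

/-- `M` is the parallel connection of `M₁` and `M₂` relative to `e`,
characterized by its set of circuits. -/
def IsParallelConn (M M₁ M₂ : Matroid α) (e : α) : Prop :=
  M₁.E ∩ M₂.E = {e} ∧ M.E = M₁.E ∪ M₂.E ∧
  ¬ MLoop M₁ e ∧ ¬ MColoop M₁ e ∧ ¬ MLoop M₂ e ∧ ¬ MColoop M₂ e ∧
  ∀ C, MCircuit M C ↔ (MCircuit M₁ C ∨ MCircuit M₂ C ∨
    ∃ C₁ C₂, MCircuit M₁ C₁ ∧ MCircuit M₂ C₂ ∧ e ∈ C₁ ∧ e ∈ C₂ ∧ C = (C₁ ∪ C₂) \ {e})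

/-- `M` is the series connection of `M₁` and `M₂` relative to `e`,
characterized by its set of circuits. -/
def IsSeriesConn (M M₁ M₂ : Matroid α) (e : α) : Prop :=
  M₁.E ∩ M₂.E = {e} ∧ M.E = M₁.E ∪ M₂.E ∧
  ¬ MLoop M₁ e ∧ ¬ MColoop M₁ e ∧ ¬ MLoop M₂ e ∧ ¬ MColoop M₂ e ∧
  ∀ C, MCircuit M C ↔ ((MCircuit M₁ C ∧ e ∉ C) ∨ (MCircuit M₂ C ∧ e ∉ C) ∨
    ∃ C₁ C₂, MCircuit M₁ C₁ ∧ MCircuit M₂ C₂ ∧ e ∈ C₁ ∧ e ∈ C₂ ∧ C = C₁ ∪ C₂)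

/-- Contraction of a single element, via duality: `M/e = (M* − e)*`. -/
noncomputable def contractElem (M : Matroid α) (e : α) : Matroid α :=
  (M✶ ↾ (M.E \ {e}))✶

/-- `N` is a simplification of `M`: a simple restriction of `M` to a set meeting
every parallel class of non-loops. -/
def IsSimplificationOf (N M : Matroid α) : Prop :=
  ∃ S ⊆ M.E, N = M ↾ S ∧ MSimple N ∧
    ∀ x ∈ M.E, M.Indep {x} → ∃ y ∈ S, x = y ∨ MCircuit M {x, y}

/-- `M` is (a copy of) the uniform matroid `U_{m,m+1}`. -/
def IsUnifNearCircuit (M : Matroid α) (m : ℕ) : Prop :=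
  M.E.ncard = m + 1 ∧ ∀ I, M.Indep I ↔ I ⊆ M.E ∧ I.ncard ≤ m

/-- The minimal broken circuits of an ordered matroid. -/
def MinBrokenCircuit (r : α → α → Prop) (M : Matroid α) (B : Set α) : Prop :=
  BrokenCircuit r M B ∧ ∀ B', BrokenCircuit r M B' → B' ⊆ B → B' = B

/-- A (nonempty) connected component of a matroid: a circuit-closed subset of the
ground set on which the restriction is connected. -/
def IsComponent (M : Matroid α) (S : Set α) : Prop :=
  S ⊆ M.E ∧ S.Nonempty ∧ MConnected (M ↾ S) ∧
    ∀ C, MCircuit M C → C ⊆ S ∨ Disjoint C S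

/-- Series-parallel networks: matroids obtained from a two-element circuit by
iterated series and parallel connections. -/
inductive IsSPNetwork : Matroid α → Prop
  | twoCircuit (M : Matroid α) (h1 : M.E.ncard = 2) (h2 : MCircuit M M.E) : IsSPNetwork M
  | series (M N P : Matroid α) (e : α) (h1 : P.E.ncard = 2) (h2 : MCircuit P P.E)
      (hN : IsSPNetwork N) (h : IsSeriesConn M N P e) : IsSPNetwork M
  | parallel (M N P : Matroid α) (e : α) (h1 : P.E.ncard = 2) (h2 : MCircuit P P.E)
      (hN : IsSPNetwork N) (h : IsParallelConn M N P e) : IsSPNetwork M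

/-- Iterated parallel connections of uniform matroids `U_{m,m+1}`, `m ≥ 2`. -/
inductive IsIterParallelUnif : Matroid α → Prop
  | unif (M : Matroid α) (m : ℕ) (h2 : 2 ≤ m) (h : IsUnifNearCircuit M m) :
      IsIterParallelUnif M
  | parallel (M N P : Matroid α) (e : α) (m : ℕ) (h2 : 2 ≤ m)
      (hN : IsIterParallelUnif N) (hP : IsUnifNearCircuit P m)
      (h : IsParallelConn M N P e) : IsIterParallelUnif M

/-- `M` is graphic: its circuits are the edge sets of cycles of some graph. -/
def IsGraphic (M : Matroid α) : Prop :=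
  ∃ (V : Type) (G : SimpleGraph V) (f : α → Sym2 V),
    Set.InjOn f M.E ∧ (∀ a ∈ M.E, f a ∈ G.edgeSet) ∧
    ∀ C, MCircuit M C ↔ C ⊆ M.E ∧
      ∃ (u : V) (w : G.Walk u u), w.IsCycle ∧ f '' C = {x | x ∈ w.edges}

/-- A minimal non-face of a complex. -/
def MinNonFace (Δ : Set (Set α)) (s : Set α) : Prop :=
  s ⊆ vertexSet Δ ∧ s ∉ Δ ∧ ∀ t, t ⊂ s → t ∈ Δ

/-- A complete intersection complex: the minimal non-faces are pairwise disjoint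
(equivalently, the Stanley–Reisner ring is a complete intersection). -/
def IsCIComplex (Δ : Set (Set α)) : Prop :=
  ∀ s t, MinNonFace Δ s → MinNonFace Δ t → s ≠ t → Disjoint s t

/-- The Stanley–Reisner ring of a complex over a field `K`. -/
abbrev SRRing (K : Type) [Field K] (Δ : Set (Set α)) :=
  MvPolynomial (vertexSet Δ) K ⧸ (Ideal.span
    {m : MvPolynomial (vertexSet Δ) K | ∃ s : Finset (vertexSet Δ),
      (Subtype.val '' (s : Set (vertexSet Δ))) ∉ Δ ∧ m = ∏ i ∈ s, MvPolynomial.X i})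

/-- A Gorenstein ring: Noetherian with finite self-injective dimension
(expressed by eventual vanishing of `Ext^i(—, R)`). -/
def IsGorensteinRing (R : Type u) [CommRing R] : Prop :=
  IsNoetherianRing R ∧ ∃ n : ℕ, ∀ (M : ModuleCat.{u} R) (i : ℕ), n < i →
    Subsingleton (((Ext R (ModuleCat.{u} R) i).obj (Opposite.op M)).obj (ModuleCat.of R R))

/-- Every finite dependent subset of the ground set contains a circuit. -/
lemma dep_contains_circuit (M : Matroid α) :
    ∀ (n : ℕ) (D : Set α), D.ncard ≤ n → D ⊆ M.E → D.Finite → ¬ M.Indep D →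
      ∃ C, C ⊆ D ∧ MCircuit M C := by
  intro n
  induction n with
  | zero =>
    intro D h hE hf hd
    have hD : D = ∅ := by
      have := (Set.ncard_eq_zero hf).mp (Nat.le_zero.mp h)
      exact this
    exact absurd (hD ▸ M.empty_indep) hd
  | succ n ih =>
    intro D h hE hf hd
    by_cases hall : ∀ D', D' ⊂ D → M.Indep D'
    · exact ⟨D, subset_rfl, hd, hE, hall⟩
    · push_neg at hall
      obtain ⟨D', hD'sub, hD'dep⟩ := hall
      have hfin' := hf.subset hD'sub.subset
      have hlt : D'.ncard < D.ncard := Set.ncard_lt_ncard hD'sub hf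
      obtain ⟨C, hCD, hC⟩ := ih D' (by omega) (hD'sub.subset.trans hE) hfin' hD'dep
      exact ⟨C, hCD.trans hD'sub.subset, hC⟩

/-- In a simple matroid, every set of at most two elements of the ground set
is independent. -/
lemma simple_indep_of_small {M : Matroid α} (hs : MSimple M) {D : Set α} (hDE : D ⊆ M.E)
    (hfin : D.Finite) (hcard : D.ncard ≤ 2) : M.Indep D := by
  by_contra hd
  obtain ⟨C, hCD, hC⟩ := dep_contains_circuit M D.ncard D le_rfl hDE hfin hd
  have h3 := hs C hC
  have hle := Set.ncard_le_ncard hCD hfin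
  omega

/-- Independence in the contraction from independence in `M`. -/
lemma contract_indep_of_indep {M : Matroid α} {e : α} {I : Set α}
    (hI : I ⊆ M.E \ {e}) (hind : M.Indep (insert e I)) :
    (contractElem M e).Indep I := by
  obtain ⟨B, hB, hIB⟩ := hind.exists_isBase_superset
  have heB : e ∈ B := hIB (Set.mem_insert e I)
  have hD : M✶.IsBase (M.E \ B) := hB.compl_isBase_dual
  have hsub : M.E \ B ⊆ M.E \ {e} :=
    Set.diff_subset_diff_right (by simpa using heB)
  have hbase : (M✶ ↾ (M.E \ {e})).IsBase (M.E \ B) := by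
    rw [Matroid.isBase_iff_maximal_indep]
    constructor
    · exact Matroid.restrict_indep_iff.mpr ⟨hD.indep, hsub⟩
    · intro J hJ hDJ
      have hJ' := Matroid.restrict_indep_iff.mp hJ
      exact (hD.eq_of_subset_indep hJ'.1 hDJ).symm.subset
  rw [contractElem, Matroid.dual_indep_iff_exists']
  refine ⟨by simpa using hI, M.E \ B, hbase, ?_⟩
  exact Set.disjoint_of_subset_left ((Set.subset_insert e I).trans hIB)
    Set.disjoint_sdiff_right

/-- A two-element circuit of the contraction by `e` yields a triangle
through `e` in a simple matroid. -/
lemma triangle_of_contract_pair {M : Matroid α} (hfin : M.E.Finite) (hs : MSimple M)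
    {e x y : α} (he : e ∈ M.E) (hx : x ∈ M.E \ {e}) (hy : y ∈ M.E \ {e})
    (hC : MCircuit (contractElem M e) {x, y}) : MCircuit M {e, x, y} := by
  have hsubE : ({e, x, y} : Set α) ⊆ M.E := by
    intro z hz
    rcases hz with rfl | hz
    · exact he
    · rcases hz with rfl | hz
      · exact hx.1
      · rw [Set.mem_singleton_iff] at hz; exact hz ▸ hy.1
  refine ⟨?_, hsubE, ?_⟩
  · intro hind
    exact hC.1 (contract_indep_of_indep
      (by intro z hz; rcases hz with rfl | hz
          · exact hx
          · rw [Set.mem_singleton_iff] at hz; exact hz ▸ hy) hind)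
  · intro D hD
    have hDfin : D.Finite := (hfin.subset hsubE).subset hD.subset
    have hlt : D.ncard < ({e, x, y} : Set α).ncard :=
      Set.ncard_lt_ncard hD (hfin.subset hsubE)
    have h3 : ({e, x, y} : Set α).ncard ≤ 3 := by
      calc ({e, x, y} : Set α).ncard ≤ ({x, y} : Set α).ncard + 1 := Set.ncard_insert_le _ _
        _ ≤ (({y} : Set α).ncard + 1) + 1 := by
            exact Nat.add_le_add_right (Set.ncard_insert_le _ _) 1
        _ = 3 := by rw [Set.ncard_singleton]
    exact simple_indep_of_small hs (hD.subset.trans hsubE) hDfin (by omega)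

/-- There cannot be two distinct elements parallel to `e` inside a series
factor, if the big matroid is simple. -/
lemma no_two_parallel {M N : Matroid α} (hfin : M.E.Finite) (hs : MSimple M)
    (hNE : N.E ⊆ M.E) {e a a' : α}
    (hchar : ∀ D, MCircuit N D → e ∉ D → MCircuit M D)
    (heN : N.Indep {e})
    (h1 : MCircuit N {e, a}) (h2 : MCircuit N {e, a'})
    (hae : a ≠ e) (ha'e : a' ≠ e) (hne : a ≠ a') : False := by
  have haE : a ∈ N.E := h1.2.1 (by simp)
  have ha'E : a' ∈ N.E := h2.2.1 (by simp)
  have hpairE : ({a, a'} : Set α) ⊆ N.E := by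
    intro z hz; rcases hz with rfl | hz
    · exact haE
    · rw [Set.mem_singleton_iff] at hz; exact hz ▸ ha'E
  by_cases hind : N.Indep {a, a'}
  · have hlt : ({e} : Set α).encard < ({a, a'} : Set α).encard := by
      rw [Set.encard_singleton, Set.encard_pair hne]
      norm_num
    obtain ⟨z, hz, hzi⟩ := heN.augment hind hlt
    have hz2 : z ∈ ({a, a'} : Set α) := hz.1
    rcases hz2 with rfl | hz2
    · exact h1.1 (by simpa [Set.pair_comm z e] using hzi)
    · rw [Set.mem_singleton_iff] at hz2
      subst hz2
      exact h2.1 (by simpa [Set.pair_comm z e] using hzi)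
  · obtain ⟨C, hCsub, hC⟩ := dep_contains_circuit N ({a, a'} : Set α).ncard _ le_rfl
      hpairE (Set.toFinite _) hind
    have heC : e ∉ C := by
      intro h
      rcases hCsub h with h' | h'
      · exact hae h'.symm
      · rw [Set.mem_singleton_iff] at h'; exact ha'e h'.symm
    have hCM := hchar C hC heC
    have h3 := hs C hCM
    have hle : C.ncard ≤ 2 := by
      calc C.ncard ≤ ({a, a'} : Set α).ncard := Set.ncard_le_ncard hCsub (Set.toFinite _)
        _ ≤ ({a'} : Set α).ncard + 1 := Set.ncard_insert_le _ _
        _ = 2 := by rw [Set.ncard_singleton]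
    omega

/-- in the setting of the proof of Theorem 1.2, a series
connection relative to `e₁` has at most one 3-element circuit containing `e₁`,
so the simplification of `M/e₁` has at least `|M| − 2` elements. -/
theorem at_most_one_triangle_of_seriesConn {α : Type*} [LinearOrder α]
    (M : Matroid α) (hfin : M.E.Finite) (hconn : MConnected M)
    (hsimple : MSimple M) (r : ℕ) (hr3 : 3 ≤ r)
    (hr : ∀ B, M.IsBase B → B.ncard = r)
    (hbeta : hVec (BCC (· ≤ ·) M) r (r - 1) = 1)
    (hirr : ¬ ∃ (M₁ M₂ : Matroid α) (e : α),
      M₁.E ⊂ M.E ∧ M₂.E ⊂ M.E ∧ IsParallelConn M M₁ M₂ e)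
    (e₁ : α) (he₁ : e₁ ∈ M.E)
    (hrep : ∃ (V : Type) (G : SimpleGraph V) (f : α → Sym2 V),
      Set.InjOn f M.E ∧ (∀ a ∈ M.E, f a ∈ G.edgeSet) ∧
      (∀ C, MCircuit M C ↔ C ⊆ M.E ∧
        ∃ (u : V) (w : G.Walk u u), w.IsCycle ∧ f '' C = {x | x ∈ w.edges}) ∧
      ∃ v : V, (G.neighborSet v).ncard = 2 ∧ v ∈ f e₁)
    (hser : ∃ (M₁ M₂ : Matroid α),
      M₁.E ⊂ M.E ∧ M₂.E ⊂ M.E ∧ IsSeriesConn M M₁ M₂ e₁) :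
    (∀ C C', MCircuit M C → MCircuit M C' → e₁ ∈ C → e₁ ∈ C' →
      C.ncard = 3 → C'.ncard = 3 → C = C') ∧
    ∀ N, IsSimplificationOf N (contractElem M e₁) →
      M.E.ncard - 2 ≤ N.E.ncard := by
  classical
  obtain ⟨M₁, M₂, hM1ss, hM2ss, hsc⟩ := hser
  obtain ⟨hinterE, hEeq, hL1, hCL1, hL2, hCL2, hchar⟩ := hsc
  have he₁I : e₁ ∈ M₁.E ∩ M₂.E := by rw [hinterE]; exact rfl
  have he₁M₁ : e₁ ∈ M₁.E := he₁I.1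
  have he₁M₂ : e₁ ∈ M₂.E := he₁I.2
  have hIndep1 : M₁.Indep {e₁} := by
    by_contra h; exact hL1 ⟨he₁M₁, h⟩
  have hIndep2 : M₂.Indep {e₁} := by
    by_contra h; exact hL2 ⟨he₁M₂, h⟩
  have hchar1 : ∀ D, MCircuit M₁ D → e₁ ∉ D → MCircuit M D :=
    fun D hD he => (hchar D).mpr (Or.inl ⟨hD, he⟩)
  have hchar2 : ∀ D, MCircuit M₂ D → e₁ ∉ D → MCircuit M D :=
    fun D hD he => (hchar D).mpr (Or.inr (Or.inl ⟨hD, he⟩))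
  have hdec : ∀ C, MCircuit M C → e₁ ∈ C → C.ncard = 3 →
      ∃ a b, a ≠ e₁ ∧ b ≠ e₁ ∧ MCircuit M₁ {e₁, a} ∧ MCircuit M₂ {e₁, b} ∧
        C = {e₁, a, b} := by
    intro C hC heC hcard
    rcases (hchar C).mp hC with ⟨_, h⟩ | ⟨_, h⟩ | ⟨C₁, C₂, h1, h2, he1, he2, hCeq⟩
    · exact absurd heC h
    · exact absurd heC h
    · have hC1fin : C₁.Finite := hfin.subset (h1.2.1.trans hM1ss.subset)
      have hC2fin : C₂.Finite := hfin.subset (h2.2.1.trans hM2ss.subset)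
      have hinter : C₁ ∩ C₂ = {e₁} := by
        apply Set.Subset.antisymm
        · intro z hz
          rw [← hinterE]; exact ⟨h1.2.1 hz.1, h2.2.1 hz.2⟩
        · intro z hz; rw [Set.mem_singleton_iff] at hz; exact hz ▸ ⟨he1, he2⟩
      have hcards := Set.ncard_union_add_ncard_inter C₁ C₂ hC1fin hC2fin
      rw [← hCeq, hcard, hinter, Set.ncard_singleton] at hcards
      have hge1 : 2 ≤ C₁.ncard := by
        by_contra hcon
        push_neg at hcon
        have hpos : 0 < C₁.ncard := (Set.ncard_pos hC1fin).mpr ⟨e₁, he1⟩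
        have h1' : C₁.ncard = 1 := by omega
        obtain ⟨x, hx⟩ := Set.ncard_eq_one.mp h1'
        rw [hx, Set.mem_singleton_iff] at he1
        subst he1
        rw [hx] at h1
        exact absurd hIndep1 h1.1
      have hge2 : 2 ≤ C₂.ncard := by
        by_contra hcon
        push_neg at hcon
        have hpos : 0 < C₂.ncard := (Set.ncard_pos hC2fin).mpr ⟨e₁, he2⟩
        have h2' : C₂.ncard = 1 := by omega
        obtain ⟨x, hx⟩ := Set.ncard_eq_one.mp h2'
        rw [hx, Set.mem_singleton_iff] at he2
        subst he2
        rw [hx] at h2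
        exact absurd hIndep2 h2.1
      have hC1card : C₁.ncard = 2 := by omega
      have hC2card : C₂.ncard = 2 := by omega
      obtain ⟨x, y, hxy, hXY⟩ := Set.ncard_eq_two.mp hC1card
      have ha : ∃ a, a ≠ e₁ ∧ C₁ = {e₁, a} := by
        rw [hXY, Set.mem_insert_iff, Set.mem_singleton_iff] at he1
        rcases he1 with h | h
        · subst h; exact ⟨y, fun hh => hxy hh.symm, hXY⟩
        · subst h; exact ⟨x, fun hh => hxy hh, by rw [hXY, Set.pair_comm]⟩
      obtain ⟨x', y', hxy', hXY'⟩ := Set.ncard_eq_two.mp hC2card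
      have hb : ∃ b, b ≠ e₁ ∧ C₂ = {e₁, b} := by
        rw [hXY', Set.mem_insert_iff, Set.mem_singleton_iff] at he2
        rcases he2 with h | h
        · subst h; exact ⟨y', fun hh => hxy' hh.symm, hXY'⟩
        · subst h; exact ⟨x', fun hh => hxy' hh, by rw [hXY', Set.pair_comm]⟩
      obtain ⟨a, hane, haeq⟩ := ha
      obtain ⟨b, hbne, hbeq⟩ := hb
      refine ⟨a, b, hane, hbne, haeq ▸ h1, hbeq ▸ h2, ?_⟩
      rw [hCeq, haeq, hbeq]
      ext z
      simp only [Set.mem_union, Set.mem_insert_iff, Set.mem_singleton_iff]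
      tauto
  have key : ∀ C C', MCircuit M C → MCircuit M C' → e₁ ∈ C → e₁ ∈ C' →
      C.ncard = 3 → C'.ncard = 3 → C = C' := by
    intro C C' hC hC' heC heC' h3 h3'
    obtain ⟨a, b, hane, hbne, ha1, hb1, hCeq⟩ := hdec C hC heC h3
    obtain ⟨a', b', hane', hbne', ha1', hb1', hCeq'⟩ := hdec C' hC' heC' h3'
    have haa : a = a' := by
      by_contra hne
      exact no_two_parallel hfin hsimple hM1ss.subset hchar1 hIndep1 ha1 ha1' hane hane' hne
    have hbb : b = b' := by
      by_contra hne
      exact no_two_parallel hfin hsimple hM2ss.subset hchar2 hIndep2 hb1 hb1' hbne hbne' hne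
    rw [hCeq, hCeq', haa, hbb]
  refine ⟨key, ?_⟩
  intro N hN
  obtain ⟨S, hSsub, hNeq, hNsimple, hcover⟩ := hN
  have hM'E : (contractElem M e₁).E = M.E \ {e₁} := rfl
  have hSX : S ⊆ M.E \ {e₁} := hM'E ▸ hSsub
  have hXfin : (M.E \ {e₁}).Finite := hfin.subset diff_subset
  have hne1 : ∀ u ∈ (M.E \ {e₁} : Set α), u ≠ e₁ := by
    intro u hu; simpa using hu.2
  have hnonloop : ∀ x ∈ (M.E \ {e₁} : Set α), (contractElem M e₁).Indep {x} := by
    intro x hx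
    apply contract_indep_of_indep (by simpa using hx)
    apply simple_indep_of_small hsimple
    · intro z hz
      rcases hz with rfl | hz
      · exact he₁
      · rw [Set.mem_singleton_iff] at hz; exact hz ▸ hx.1
    · exact Set.toFinite _
    · calc (insert e₁ {x} : Set α).ncard ≤ ({x} : Set α).ncard + 1 := Set.ncard_insert_le _ _
        _ = 2 := by rw [Set.ncard_singleton]
  have hsel : ∀ x ∈ (M.E \ {e₁} : Set α), ∃ y, y ∈ S ∧
      (x = y ∨ MCircuit (contractElem M e₁) {x, y}) := by
    intro x hx
    obtain ⟨y, hyS, hy⟩ := hcover x (hM'E ▸ hx) (hnonloop x hx)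
    exact ⟨y, hyS, hy⟩
  choose! g hgS hgP using hsel
  have htri : ∀ x ∈ (M.E \ {e₁} : Set α), MCircuit (contractElem M e₁) {x, g x} →
      MCircuit M {e₁, x, g x} ∧ x ≠ g x := by
    intro x hx hc
    have hgx : g x ∈ M.E \ {e₁} := hSX (hgS x hx)
    have hxgx : x ≠ g x := by
      intro hh
      have hps : ({x, g x} : Set α) = {x} := by rw [← hh]; simp
      rw [hps] at hc
      exact hc.1 (hnonloop x hx)
    exact ⟨triangle_of_contract_pair hfin hsimple he₁ hx hgx hc, hxgx⟩
  have htricard : ∀ x ∈ (M.E \ {e₁} : Set α), x ≠ g x →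
      ({e₁, x, g x} : Set α).ncard = 3 := by
    intro x hx hxy
    have hgx : g x ∈ M.E \ {e₁} := hSX (hgS x hx)
    have hemem : e₁ ∉ ({x, g x} : Set α) := by
      intro h
      rcases h with h | h
      · exact hne1 x hx h.symm
      · rw [Set.mem_singleton_iff] at h; exact hne1 _ hgx h.symm
    rw [Set.ncard_insert_of_notMem hemem (Set.toFinite _),
        Set.ncard_insert_of_notMem (by simpa using hxy) (Set.toFinite _),
        Set.ncard_singleton]
  have hinjex : ∃ z, Set.InjOn g ((M.E \ {e₁}) \ {z}) := by
    by_cases hex : ∃ C, MCircuit M C ∧ e₁ ∈ C ∧ C.ncard = 3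
    · obtain ⟨C₀, hC₀, heC₀, hcard₀⟩ := hex
      obtain ⟨a, b, hane, hbne, _, _, hC₀eq⟩ := hdec C₀ hC₀ heC₀ hcard₀
      refine ⟨a, ?_⟩
      intro x hx x' hx' heq
      have hxX : x ∈ M.E \ {e₁} := hx.1
      have hx'X : x' ∈ M.E \ {e₁} := hx'.1
      have hxa : x ≠ a := by simpa using hx.2
      have hx'a : x' ≠ a := by simpa using hx'.2
      rcases hgP x hxX with h1 | h1 <;> rcases hgP x' hx'X with h2 | h2
      · rw [h1, heq, ← h2]
      · exfalso
        obtain ⟨hT', hneT'⟩ := htri x' hx'X h2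
        have h3' := htricard x' hx'X hneT'
        have hTeq := key _ _ hT' hC₀ (by simp) heC₀ h3' hcard₀
        have haC : a ∈ ({e₁, x', g x'} : Set α) := by
          rw [hTeq, hC₀eq]; simp
        simp only [Set.mem_insert_iff, Set.mem_singleton_iff] at haC
        rcases haC with h | h | h
        · exact hane h
        · exact hx'a h.symm
        · rw [← heq, ← h1] at h; exact hxa h.symm
      · exfalso
        obtain ⟨hT, hneT⟩ := htri x hxX h1
        have h3 := htricard x hxX hneT
        have hTeq := key _ _ hT hC₀ (by simp) heC₀ h3 hcard₀
        have haC : a ∈ ({e₁, x, g x} : Set α) := by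
          rw [hTeq, hC₀eq]; simp
        simp only [Set.mem_insert_iff, Set.mem_singleton_iff] at haC
        rcases haC with h | h | h
        · exact hane h
        · exact hxa h.symm
        · rw [heq, ← h2] at h; exact hx'a h.symm
      · obtain ⟨hT, hneT⟩ := htri x hxX h1
        obtain ⟨hT', hneT'⟩ := htri x' hx'X h2
        have hTeq := key _ _ hT hT' (by simp) (by simp)
          (htricard x hxX hneT) (htricard x' hx'X hneT')
        have hxmem : x ∈ ({e₁, x', g x'} : Set α) := by rw [← hTeq]; simp
        simp only [Set.mem_insert_iff, Set.mem_singleton_iff] at hxmem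
        rcases hxmem with h | h | h
        · exact absurd h (hne1 x hxX)
        · exact h
        · rw [← heq] at h; exact absurd h hneT
    · refine ⟨e₁, ?_⟩
      intro x hx x' hx' heq
      have hxX : x ∈ M.E \ {e₁} := hx.1
      have hx'X : x' ∈ M.E \ {e₁} := hx'.1
      rcases hgP x hxX with h1 | h1 <;> rcases hgP x' hx'X with h2 | h2
      · rw [h1, heq, ← h2]
      · exfalso
        obtain ⟨hT', hneT'⟩ := htri x' hx'X h2
        exact hex ⟨_, hT', by simp, htricard x' hx'X hneT'⟩
      · exfalso
        obtain ⟨hT, hneT⟩ := htri x hxX h1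
        exact hex ⟨_, hT, by simp, htricard x hxX hneT⟩
      · exfalso
        obtain ⟨hT, hneT⟩ := htri x hxX h1
        exact hex ⟨_, hT, by simp, htricard x hxX hneT⟩
  obtain ⟨z, hinj⟩ := hinjex
  have hScount : ((M.E \ {e₁}) \ {z}).ncard ≤ S.ncard :=
    Set.ncard_le_ncard_of_injOn g (fun x hx => hgS x hx.1) hinj (hfin.subset (hSX.trans diff_subset))
  have hE1 : (M.E \ {e₁}).ncard = M.E.ncard - 1 := Set.ncard_diff_singleton_of_mem he₁
  have hE0 : 0 < M.E.ncard := (Set.ncard_pos hfin).mpr ⟨e₁, he₁⟩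
  have hE2 : (M.E \ {e₁}).ncard ≤ ((M.E \ {e₁}) \ {z}).ncard + 1 := by
    by_cases hz : z ∈ M.E \ {e₁}
    · rw [Set.ncard_diff_singleton_of_mem hz]
      have hpos : 0 < (M.E \ {e₁}).ncard := (Set.ncard_pos hXfin).mpr ⟨z, hz⟩
      omega
    · rw [Set.diff_singleton_eq_self hz]
      omega
  have hNE : N.E = S := by rw [hNeq, Matroid.restrict_ground_eq]
  rw [hNE]
  omega
end PaperBC
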